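/- Let G be a K_{2,3}-saturated graph, α a vertex, V₁ = N[α] ∪ {v : |N(v) ∩ N(α)| = 2}, U₂ the set of vertices outside V₁ with exactly one neighbor in N(α), and U₃ = V \ (V₁ ∪ U₂). Then every z ∈ U₃ satisfies |N(z) ∩ (V \ U₃)| ≥ 1 + |{x ∈ N(α) : N(z) ∩ N(x) ∩ U₂ ≠ ∅}|. -/

import Mathlib

open SimpleGraph

/-- `G` contains a subgraph isomorphic to the complete bipartite graph `K_{2,3}`. -/
def HasK23 {V : Type*} (G : SimpleGraph V) : Prop :=
  ∃ f : (Fin 2 ⊕ Fin 3) ↪ V,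
    ∀ a b, (completeBipartiteGraph (Fin 2) (Fin 3)).Adj a b → G.Adj (f a) (f b)

/-- `G` is `K_{2,3}`-saturated: `K_{2,3}`-free, but adding any edge between two
non-adjacent vertices creates a `K_{2,3}`. -/
def K23Saturated {V : Type*} (G : SimpleGraph V) : Prop :=
  ¬ HasK23 G ∧ ∀ u v : V, u ≠ v → ¬ G.Adj u v →
    HasK23 (G ⊔ SimpleGraph.fromEdgeSet {s(u, v)})

lemma hasK23_of {V : Type*} {G : SimpleGraph V} {u v a b c : V}
    (huv : u ≠ v) (hab : a ≠ b) (hac : a ≠ c) (hbc : b ≠ c)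
    (hua : G.Adj u a) (hub : G.Adj u b) (huc : G.Adj u c)
    (hva : G.Adj v a) (hvb : G.Adj v b) (hvc : G.Adj v c) : HasK23 G := by
  have h1 : u ≠ a := hua.ne
  have h2 : u ≠ b := hub.ne
  have h3 : u ≠ c := huc.ne
  have h4 : v ≠ a := hva.ne
  have h5 : v ≠ b := hvb.ne
  have h6 : v ≠ c := hvc.ne
  refine ⟨⟨Sum.elim ![u, v] ![a, b, c], ?_⟩, ?_⟩
  · intro x y hxy
    rcases x with i | i <;> rcases y with j | j <;>
      fin_cases i <;> fin_cases j <;> simp_all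
  · intro x y hxy
    rcases x with i | i <;> rcases y with j | j <;>
      fin_cases i <;> fin_cases j <;>
      simp_all [hua.symm, hub.symm, huc.symm, hva.symm, hvb.symm, hvc.symm]
    all_goals first | exact hua | exact hub | exact huc | exact hva | exact hvb | exact hvc | exact hua.symm | exact hub.symm | exact huc.symm | exact hva.symm | exact hvb.symm | exact hvc.symm

lemma common_le_two {V : Type*} {G : SimpleGraph V} (hfree : ¬ HasK23 G) {u v : V}
    (huv : u ≠ v) : (G.neighborSet u ∩ G.neighborSet v).ncard ≤ 2 := by
  by_contra h
  push_neg at h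
  obtain ⟨t, hts, htc⟩ := Set.exists_subset_card_eq h
  obtain ⟨a, b, c, hab, hac, hbc, rfl⟩ := Set.ncard_eq_three.mp htc
  have ha := hts (by simp : a ∈ ({a, b, c} : Set V))
  have hb := hts (by simp : b ∈ ({a, b, c} : Set V))
  have hc := hts (by simp : c ∈ ({a, b, c} : Set V))
  exact hfree (hasK23_of huv hab hac hbc ha.1 hb.1 hc.1 ha.2 hb.2 hc.2)

lemma sat_aux {V : Type*} {G : SimpleGraph V} (hfree : ¬ HasK23 G) {z w : V}
    (hzw : z ≠ w) (h : HasK23 (G ⊔ SimpleGraph.fromEdgeSet {s(z, w)})) :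
    (∃ c d e, G.Adj w c ∧ G.Adj z d ∧ G.Adj z e ∧ G.Adj c d ∧ G.Adj c e ∧ d ≠ e) ∨
    (∃ c d e, G.Adj z c ∧ G.Adj w d ∧ G.Adj w e ∧ G.Adj c d ∧ G.Adj c e ∧ d ≠ e) := by
  obtain ⟨f, hf⟩ := h
  have hadj : ∀ i j, (G ⊔ SimpleGraph.fromEdgeSet {s(z, w)}).Adj (f (.inl i)) (f (.inr j)) :=
    fun i j => hf _ _ (by simp)
  have hlr : ∀ (i'' : Fin 2) (j'' : Fin 3), f (.inl i'') ≠ f (.inr j'') :=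
    fun i'' j'' hh => Sum.inl_ne_inr (f.injective hh)
  have hmiss : ∃ i j, ¬ G.Adj (f (.inl i)) (f (.inr j)) := by
    by_contra hall
    push_neg at hall
    refine hfree ⟨f, ?_⟩
    intro x y hxy
    rcases x with i | i <;> rcases y with j | j <;> simp at hxy
    · exact hall i j
    · exact (hall j i).symm
  obtain ⟨i, j, hij⟩ := hmiss
  have hG' : ∀ i' j', (f (.inl i') ≠ z ∨ f (.inr j') ≠ w) →
      (f (.inl i') ≠ w ∨ f (.inr j') ≠ z) → G.Adj (f (.inl i')) (f (.inr j')) := by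
    intro i' j' hc1 hc2
    rcases (SimpleGraph.sup_adj _ _ _ _).mp (hadj i' j') with h | h
    · exact h
    · rw [SimpleGraph.fromEdgeSet_adj, Set.mem_singleton_iff, Sym2.eq_iff] at h
      rcases h.1 with ⟨h1, h2⟩ | ⟨h1, h2⟩ <;> tauto
  have hkey := (SimpleGraph.sup_adj _ _ _ _).mp (hadj i j)
  rcases hkey with h | h
  · exact absurd h hij
  rw [SimpleGraph.fromEdgeSet_adj, Set.mem_singleton_iff, Sym2.eq_iff] at h
  obtain ⟨i', hi'⟩ : ∃ i' : Fin 2, i' ≠ i := by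
    fin_cases i; exacts [⟨1, by decide⟩, ⟨0, by decide⟩]
  obtain ⟨j1, j2, hj12, hj1, hj2⟩ : ∃ j1 j2 : Fin 3, j1 ≠ j2 ∧ j1 ≠ j ∧ j2 ≠ j := by
    fin_cases j
    exacts [⟨1, 2, by decide, by decide, by decide⟩, ⟨0, 2, by decide, by decide, by decide⟩,
      ⟨0, 1, by decide, by decide, by decide⟩]
  have hfi' : ∀ v, f (.inl i) = v → f (.inl i') ≠ v := by
    intro v hv hv'
    exact hi' (Sum.inl_injective (f.injective (hv'.trans hv.symm)))
  have hfj : ∀ (j'' : Fin 3) v, j'' ≠ j → f (.inr j) = v → f (.inr j'') ≠ v := by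
    intro j'' v hne hv hv'
    exact hne (Sum.inr_injective (f.injective (hv'.trans hv.symm)))
  have hde : f (.inr j1) ≠ f (.inr j2) := fun hh => hj12 (Sum.inr_injective (f.injective hh))
  rcases h.1 with ⟨h1, h2⟩ | ⟨h1, h2⟩
  · -- f (inl i) = z, f (inr j) = w : case A
    left
    refine ⟨f (.inl i'), f (.inr j1), f (.inr j2), ?_, ?_, ?_, ?_, ?_, hde⟩
    · have := hG' i' j (Or.inl (hfi' z h1)) (Or.inl (by rw [← h2]; exact hlr i' j))
      rw [h2] at this; exact this.symm
    · have := hG' i j1 (Or.inr (hfj j1 w hj1 h2)) (Or.inl (by rw [h1]; exact hzw))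
      rw [h1] at this; exact this
    · have := hG' i j2 (Or.inr (hfj j2 w hj2 h2)) (Or.inl (by rw [h1]; exact hzw))
      rw [h1] at this; exact this
    · exact hG' i' j1 (Or.inl (hfi' z h1)) (Or.inr (by rw [← h1]; exact (hlr i j1).symm))
    · exact hG' i' j2 (Or.inl (hfi' z h1)) (Or.inr (by rw [← h1]; exact (hlr i j2).symm))
  · -- f (inl i) = w, f (inr j) = z : case B
    right
    refine ⟨f (.inl i'), f (.inr j1), f (.inr j2), ?_, ?_, ?_, ?_, ?_, hde⟩
    · have := hG' i' j (Or.inr (by rw [h2]; exact hzw)) (Or.inl (hfi' w h1))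
      rw [h2] at this; exact this.symm
    · have := hG' i j1 (Or.inl (by rw [h1]; exact hzw.symm)) (Or.inr (hfj j1 z hj1 h2))
      rw [h1] at this; exact this
    · have := hG' i j2 (Or.inl (by rw [h1]; exact hzw.symm)) (Or.inr (hfj j2 z hj2 h2))
      rw [h1] at this; exact this
    · exact hG' i' j1 (Or.inl (by rw [← h2]; exact hlr i' j)) (Or.inl (hfi' w h1))
    · exact hG' i' j2 (Or.inl (by rw [← h2]; exact hlr i' j)) (Or.inl (hfi' w h1))

theorem U3_vertex_edge_bound {V : Type*} [Fintype V]
    (G : SimpleGraph V) (hG : K23Saturated G) (α : V)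
    (V₁ U₂ U₃ : Set V)
    (hV₁ : V₁ = insert α (G.neighborSet α) ∪
      {v | (G.neighborSet v ∩ G.neighborSet α).ncard = 2})
    (hU₂ : U₂ = {v | v ∉ V₁ ∧ (G.neighborSet v ∩ G.neighborSet α).ncard = 1})
    (hU₃ : U₃ = Set.univ \ (V₁ ∪ U₂)) :
    ∀ z ∈ U₃,
      1 + {x ∈ G.neighborSet α |
            (G.neighborSet z ∩ G.neighborSet x ∩ U₂).Nonempty}.ncard
        ≤ (G.neighborSet z \ U₃).ncard := by
  intro z hz
  have hfree := hG.1
  -- basic facts about z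
  rw [hU₃, Set.mem_diff, Set.mem_union] at hz
  push_neg at hz
  obtain ⟨-, hzV₁, hzU₂⟩ := hz
  rw [hV₁] at hzV₁
  simp only [Set.mem_union, Set.mem_insert_iff, SimpleGraph.mem_neighborSet,
    Set.mem_setOf_eq, not_or] at hzV₁
  obtain ⟨⟨hzα, hzadj⟩, hzn2⟩ := hzV₁
  have hzn1 : (G.neighborSet z ∩ G.neighborSet α).ncard ≠ 1 := by
    intro hc
    exact hzU₂ (by rw [hU₂]; exact ⟨by rw [hV₁]; simp [hzα, hzadj, hzn2], hc⟩)
  have hle2 := common_le_two hfree hzα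
  have hzero : (G.neighborSet z ∩ G.neighborSet α) = ∅ := by
    have : (G.neighborSet z ∩ G.neighborSet α).ncard = 0 := by omega
    exact (Set.ncard_eq_zero (Set.toFinite _)).mp this
  -- any vertex with a common neighbor with α is not in U₃
  have hnotU3 : ∀ u x : V, G.Adj u x → G.Adj α x → u ∉ U₃ := by
    intro u x hux hαx hu
    rw [hU₃, Set.mem_diff, Set.mem_union] at hu
    push_neg at hu
    obtain ⟨-, huV₁, huU₂⟩ := hu
    by_cases huα : u = α
    · exact huV₁ (by rw [hV₁]; left; simp [huα])
    have hx : x ∈ G.neighborSet u ∩ G.neighborSet α := ⟨hux, hαx⟩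
    have h1 : 1 ≤ (G.neighborSet u ∩ G.neighborSet α).ncard :=
      (Set.ncard_pos (Set.toFinite _)).mpr ⟨x, hx⟩
    have h2 := common_le_two hfree huα
    interval_cases hn : (G.neighborSet u ∩ G.neighborSet α).ncard
    · exact huU₂ (by rw [hU₂]; exact ⟨huV₁, hn⟩)
    · exact huV₁ (by rw [hV₁]; right; exact hn)
  have hU₂notU₃ : ∀ u ∈ U₂, u ∉ U₃ := by
    intro u hu hu3
    rw [hU₃, Set.mem_diff, Set.mem_union] at hu3
    exact hu3.2 (Or.inr hu)
  have hzadj' : ¬ G.Adj z α := fun hh => hzadj hh.symm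
  -- the selection function on S
  set S := {x ∈ G.neighborSet α |
      (G.neighborSet z ∩ G.neighborSet x ∩ U₂).Nonempty} with hS
  have hwex : ∀ x ∈ S, ∃ u, u ∈ G.neighborSet z ∩ G.neighborSet x ∩ U₂ := fun x hx => hx.2
  choose! wf hwf using hwex
  have hwsingle : ∀ x ∈ S, G.neighborSet (wf x) ∩ G.neighborSet α = {x} := by
    intro x hx
    have hw := hwf x hx
    have hU2 : wf x ∈ U₂ := hw.2
    rw [hU₂] at hU2
    obtain ⟨a, ha⟩ := Set.ncard_eq_one.mp hU2.2
    have hxmem : x ∈ G.neighborSet (wf x) ∩ G.neighborSet α :=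
      ⟨(hw.1.2 : G.Adj x (wf x)).symm, hx.1⟩
    rw [ha] at hxmem ⊢
    rw [Set.mem_singleton_iff.mp hxmem]
  have hinj : Set.InjOn wf S := by
    intro x hx y hy hxy
    have h1 := hwsingle x hx
    have h2 := hwsingle y hy
    rw [hxy, h2] at h1
    exact (Set.singleton_eq_singleton_iff.mp h1).symm
  have himg : wf '' S ⊆ G.neighborSet z \ U₃ := by
    rintro - ⟨x, hx, rfl⟩
    exact ⟨(hwf x hx).1.1, hU₂notU₃ _ (hwf x hx).2⟩
  have himgU₂ : ∀ u ∈ wf '' S, u ∈ U₂ := by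
    rintro - ⟨x, hx, rfl⟩; exact (hwf x hx).2
  -- saturation gives the extra vertex
  have hsat := sat_aux hfree hzα (hG.2 z α hzα hzadj')
  have hextra : ∃ t, t ∈ G.neighborSet z \ U₃ ∧ t ∉ wf '' S := by
    rcases hsat with ⟨c, d, e, hαc, hzd, hze, hcd, hce, hde⟩ |
      ⟨c, d, e, hzc, hαd, hαe, hcd, hce, hde⟩
    · -- case A : c ∈ N(α), d e ∈ N(z) ∩ N(c)
      have hdU : d ∈ G.neighborSet z \ U₃ := ⟨hzd, hnotU3 d c hcd.symm hαc⟩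
      have heU : e ∈ G.neighborSet z \ U₃ := ⟨hze, hnotU3 e c hce.symm hαc⟩
      by_cases hd : d ∈ wf '' S
      · by_cases he : e ∈ wf '' S
        · exfalso
          obtain ⟨x, hx, hxd⟩ := hd
          obtain ⟨y, hy, hye⟩ := he
          have hcx : c ∈ G.neighborSet (wf x) ∩ G.neighborSet α := by
            rw [hxd]; exact ⟨hcd.symm.symm.symm, hαc⟩
          have hcy : c ∈ G.neighborSet (wf y) ∩ G.neighborSet α := by
            rw [hye]; exact ⟨hce.symm.symm.symm, hαc⟩
          rw [hwsingle x hx, Set.mem_singleton_iff] at hcx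
          rw [hwsingle y hy, Set.mem_singleton_iff] at hcy
          rw [← hcx] at hxd
          rw [← hcy] at hye
          exact hde (hxd.symm.trans hye)
        · exact ⟨e, heU, he⟩
      · exact ⟨d, hdU, hd⟩
    · -- case B : c ∈ N(z), d e ∈ N(c) ∩ N(α)
      have hcα : c ≠ α := fun hh => hzadj' (hh ▸ hzc)
      have h2 : (G.neighborSet c ∩ G.neighborSet α).ncard = 2 := by
        have hge : 1 < (G.neighborSet c ∩ G.neighborSet α).ncard :=
          (Set.one_lt_ncard (Set.toFinite _)).mpr
            ⟨d, ⟨hcd, hαd⟩, e, ⟨hce, hαe⟩, hde⟩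
        have hle := common_le_two hfree hcα
        omega
      have hcV₁ : c ∈ V₁ := by rw [hV₁]; right; exact h2
      have hcU₃ : c ∉ U₃ := by
        intro hc3
        rw [hU₃, Set.mem_diff, Set.mem_union] at hc3
        exact hc3.2 (Or.inl hcV₁)
      refine ⟨c, ⟨hzc, hcU₃⟩, fun hc => ?_⟩
      have := himgU₂ c hc
      rw [hU₂] at this
      exact this.1 hcV₁
  obtain ⟨t, htT, htimg⟩ := hextra
  -- counting
  have hsub : insert t (wf '' S) ⊆ G.neighborSet z \ U₃ := by
    intro u hu
    rcases Set.mem_insert_iff.mp hu with rfl | hu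
    · exact htT
    · exact himg hu
  calc 1 + S.ncard = (wf '' S).ncard + 1 := by rw [Set.ncard_image_of_injOn hinj]; omega
    _ = (insert t (wf '' S)).ncard := (Set.ncard_insert_of_notMem htimg (Set.toFinite _)).symm
    _ ≤ (G.neighborSet z \ U₃).ncard := Set.ncard_le_ncard hsub (Set.toFinite _)
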